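/- In propositional linear multirole logic LMRL, 1-cut is admissible with a height bound: if Γ, ⟨∅⟩A has a derivation D, then Γ has a derivation D' with height(D') ≤ height(D). -/

import Mathlib

/-- Formulas of propositional linear multirole logic over role set `ρ`. -/
inductive LFormula (ρ : Type) : Type where
  | atom : ℕ → LFormula ρ
  | neg  : (ρ → ρ) → LFormula ρ → LFormula ρ
  | conj : Ultrafilter ρ → LFormula ρ → LFormula ρ → LFormula ρ
  | imp  : (ρ → ρ) → Ultrafilter ρ → LFormula ρ → LFormula ρ → LFormula ρ
  | bang : Ultrafilter ρ → LFormula ρ → LFormula ρ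

/-- Sequents: multisets of i-formulas `⟨R⟩A`. -/
abbrev LSeq (ρ : Type) := Multiset (Set ρ × LFormula ρ)

/-- An i-formula is a negatively interpreted exponential if it is of the form
`⟨R⟩!_U A` with `R ∉ U`. -/
def IsNegBang {ρ : Type} (p : Set ρ × LFormula ρ) : Prop :=
  ∃ (R : Set ρ) (U : Ultrafilter ρ) (A : LFormula ρ),
    p = (R, LFormula.bang U A) ∧ R ∉ U

/-- Derivability in propositional LMRL. -/
inductive LDeriv {ρ : Type} : LSeq ρ → Prop where
  | id (a : ℕ) (L : List (Set ρ)) :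
      L.Pairwise Disjoint → (⋃ R ∈ L, R) = Set.univ →
      LDeriv (↑(L.map fun R => ((R, LFormula.atom a) : Set ρ × LFormula ρ)) : LSeq ρ)
  | neg (Γ : LSeq ρ) (R : Set ρ) (f : ρ → ρ) (A : LFormula ρ) :
      LDeriv ((f ⁻¹' R, A) ::ₘ Γ) → LDeriv ((R, LFormula.neg f A) ::ₘ Γ)
  | imp_neg (Γ : LSeq ρ) (R : Set ρ) (f : ρ → ρ) (U : Ultrafilter ρ) (A B : LFormula ρ) :
      R ∉ U → LDeriv ((f ⁻¹' R, A) ::ₘ (R, B) ::ₘ Γ) →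
      LDeriv ((R, LFormula.imp f U A B) ::ₘ Γ)
  | imp_pos (Γ₁ Γ₂ : LSeq ρ) (R : Set ρ) (f : ρ → ρ) (U : Ultrafilter ρ) (A B : LFormula ρ) :
      R ∈ U → LDeriv ((f ⁻¹' R, A) ::ₘ Γ₁) → LDeriv ((R, B) ::ₘ Γ₂) →
      LDeriv ((R, LFormula.imp f U A B) ::ₘ (Γ₁ + Γ₂))
  | conj_neg_l (Γ : LSeq ρ) (R : Set ρ) (U : Ultrafilter ρ) (A B : LFormula ρ) :
      R ∉ U → LDeriv ((R, A) ::ₘ Γ) → LDeriv ((R, LFormula.conj U A B) ::ₘ Γ)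
  | conj_neg_r (Γ : LSeq ρ) (R : Set ρ) (U : Ultrafilter ρ) (A B : LFormula ρ) :
      R ∉ U → LDeriv ((R, B) ::ₘ Γ) → LDeriv ((R, LFormula.conj U A B) ::ₘ Γ)
  | conj_pos (Γ : LSeq ρ) (R : Set ρ) (U : Ultrafilter ρ) (A B : LFormula ρ) :
      R ∈ U → LDeriv ((R, A) ::ₘ Γ) → LDeriv ((R, B) ::ₘ Γ) →
      LDeriv ((R, LFormula.conj U A B) ::ₘ Γ)
  | bang_pos (Γ : LSeq ρ) (R : Set ρ) (U : Ultrafilter ρ) (A : LFormula ρ) :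
      R ∈ U → (∀ p ∈ Γ, IsNegBang p) → LDeriv ((R, A) ::ₘ Γ) →
      LDeriv ((R, LFormula.bang U A) ::ₘ Γ)
  | bang_neg_weaken (Γ : LSeq ρ) (R : Set ρ) (U : Ultrafilter ρ) (A : LFormula ρ) :
      R ∉ U → LDeriv Γ → LDeriv ((R, LFormula.bang U A) ::ₘ Γ)
  | bang_neg_derelict (Γ : LSeq ρ) (R : Set ρ) (U : Ultrafilter ρ) (A : LFormula ρ) :
      R ∉ U → LDeriv ((R, A) ::ₘ Γ) → LDeriv ((R, LFormula.bang U A) ::ₘ Γ)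
  | bang_neg_contract (Γ : LSeq ρ) (R : Set ρ) (U : Ultrafilter ρ) (A : LFormula ρ) :
      R ∉ U → LDeriv ((R, LFormula.bang U A) ::ₘ (R, LFormula.bang U A) ::ₘ Γ) →
      LDeriv ((R, LFormula.bang U A) ::ₘ Γ)

/-- `LDerivH Γ n` : the sequent Γ has an LMRL derivation of tree height at most `n`. -/
inductive LDerivH {ρ : Type} : LSeq ρ → ℕ → Prop where
  | id (a : ℕ) (L : List (Set ρ)) (n : ℕ) :
      L.Pairwise Disjoint → (⋃ R ∈ L, R) = Set.univ →
      LDerivH (↑(L.map fun R => ((R, LFormula.atom a) : Set ρ × LFormula ρ)) : LSeq ρ) (n + 1)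
  | neg (Γ : LSeq ρ) (R : Set ρ) (f : ρ → ρ) (A : LFormula ρ) (n : ℕ) :
      LDerivH ((f ⁻¹' R, A) ::ₘ Γ) n → LDerivH ((R, LFormula.neg f A) ::ₘ Γ) (n + 1)
  | imp_neg (Γ : LSeq ρ) (R : Set ρ) (f : ρ → ρ) (U : Ultrafilter ρ) (A B : LFormula ρ) (n : ℕ) :
      R ∉ U → LDerivH ((f ⁻¹' R, A) ::ₘ (R, B) ::ₘ Γ) n →
      LDerivH ((R, LFormula.imp f U A B) ::ₘ Γ) (n + 1)
  | imp_pos (Γ₁ Γ₂ : LSeq ρ) (R : Set ρ) (f : ρ → ρ) (U : Ultrafilter ρ) (A B : LFormula ρ) (n : ℕ) :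
      R ∈ U → LDerivH ((f ⁻¹' R, A) ::ₘ Γ₁) n → LDerivH ((R, B) ::ₘ Γ₂) n →
      LDerivH ((R, LFormula.imp f U A B) ::ₘ (Γ₁ + Γ₂)) (n + 1)
  | conj_neg_l (Γ : LSeq ρ) (R : Set ρ) (U : Ultrafilter ρ) (A B : LFormula ρ) (n : ℕ) :
      R ∉ U → LDerivH ((R, A) ::ₘ Γ) n → LDerivH ((R, LFormula.conj U A B) ::ₘ Γ) (n + 1)
  | conj_neg_r (Γ : LSeq ρ) (R : Set ρ) (U : Ultrafilter ρ) (A B : LFormula ρ) (n : ℕ) :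
      R ∉ U → LDerivH ((R, B) ::ₘ Γ) n → LDerivH ((R, LFormula.conj U A B) ::ₘ Γ) (n + 1)
  | conj_pos (Γ : LSeq ρ) (R : Set ρ) (U : Ultrafilter ρ) (A B : LFormula ρ) (n : ℕ) :
      R ∈ U → LDerivH ((R, A) ::ₘ Γ) n → LDerivH ((R, B) ::ₘ Γ) n →
      LDerivH ((R, LFormula.conj U A B) ::ₘ Γ) (n + 1)
  | bang_pos (Γ : LSeq ρ) (R : Set ρ) (U : Ultrafilter ρ) (A : LFormula ρ) (n : ℕ) :
      R ∈ U → (∀ p ∈ Γ, IsNegBang p) → LDerivH ((R, A) ::ₘ Γ) n →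
      LDerivH ((R, LFormula.bang U A) ::ₘ Γ) (n + 1)
  | bang_neg_weaken (Γ : LSeq ρ) (R : Set ρ) (U : Ultrafilter ρ) (A : LFormula ρ) (n : ℕ) :
      R ∉ U → LDerivH Γ n → LDerivH ((R, LFormula.bang U A) ::ₘ Γ) (n + 1)
  | bang_neg_derelict (Γ : LSeq ρ) (R : Set ρ) (U : Ultrafilter ρ) (A : LFormula ρ) (n : ℕ) :
      R ∉ U → LDerivH ((R, A) ::ₘ Γ) n → LDerivH ((R, LFormula.bang U A) ::ₘ Γ) (n + 1)
  | bang_neg_contract (Γ : LSeq ρ) (R : Set ρ) (U : Ultrafilter ρ) (A : LFormula ρ) (n : ℕ) :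
      R ∉ U → LDerivH ((R, LFormula.bang U A) ::ₘ (R, LFormula.bang U A) ::ₘ Γ) n →
      LDerivH ((R, LFormula.bang U A) ::ₘ Γ) (n + 1)
  | mono (Γ : LSeq ρ) (n : ℕ) : LDerivH Γ n → LDerivH Γ (n + 1)

private theorem lmrl_cut_aux {ρ : Type} : ∀ (n : ℕ) (Δ : LSeq ρ), LDerivH Δ n →
    ∀ (Γ : LSeq ρ) (A : LFormula ρ), Δ = (∅, A) ::ₘ Γ → LDerivH Γ n := by
  classical
  intro n
  induction n using Nat.strong_induction_on with
  | _ n IH =>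
  intro Δ h
  cases h with
  | id a L m hdis huniv =>
      intro Γ A heq
      have hmem : ((∅ : Set ρ), A) ∈ (↑(L.map fun R => ((R, LFormula.atom a) : Set ρ × LFormula ρ)) : LSeq ρ) := by
        rw [heq]; exact Multiset.mem_cons_self _ _
      rw [Multiset.mem_coe, List.mem_map] at hmem
      obtain ⟨R₀, hR₀, hfR₀⟩ := hmem
      injection hfR₀ with hR₀e hAe
      subst hAe
      -- R₀ = ∅ and ∅ ∈ L
      have hEm : (∅ : Set ρ) ∈ L := by rw [← hR₀e]; exact hR₀
      have hinj : Function.Injective (fun R => ((R, LFormula.atom a) : Set ρ × LFormula ρ)) := by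
        intro x y hxy; simpa using hxy
      have hperm : List.Perm L ((∅ : Set ρ) :: L.erase ∅) := List.perm_cons_erase hEm
      have hΓ : Γ = (↑((L.erase ∅).map fun R => ((R, LFormula.atom a) : Set ρ × LFormula ρ)) : LSeq ρ) := by
        have h1 : (↑(L.map fun R => ((R, LFormula.atom a) : Set ρ × LFormula ρ)) : LSeq ρ)
            = (∅, LFormula.atom a) ::ₘ (↑((L.erase ∅).map fun R => ((R, LFormula.atom a) : Set ρ × LFormula ρ)) : LSeq ρ) := by
          exact Multiset.coe_eq_coe.mpr (hperm.map _)
        rw [h1] at heq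
        exact ((Multiset.cons_inj_right _).mp heq).symm
      rw [hΓ]
      refine LDerivH.id a (L.erase ∅) m (hdis.sublist List.erase_sublist) ?_
      rw [← huniv]
      ext x
      simp only [Set.mem_iUnion, exists_prop]
      constructor
      · rintro ⟨R, hR, hx⟩
        exact ⟨R, (hperm.mem_iff.mpr (List.mem_cons_of_mem _ hR)), hx⟩
      · rintro ⟨R, hR, hx⟩
        rcases List.mem_cons.mp (hperm.mem_iff.mp hR) with h | h
        · subst h; exact absurd hx (Set.notMem_empty x)
        · exact ⟨R, h, hx⟩
  | neg Γ' R f A' m hprem =>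
      intro Γ A heq
      rcases Multiset.cons_eq_cons.mp heq with ⟨hhd, hΓ⟩ | ⟨_, Θ, h1, h2⟩
      · injection hhd with hR hA
        subst hΓ; subst hR
        rw [Set.preimage_empty] at hprem
        exact LDerivH.mono _ _ (IH m (Nat.lt_succ_self m) _ hprem _ A' rfl)
      · subst h1; subst h2
        rw [Multiset.cons_swap] at hprem
        exact LDerivH.neg _ _ _ _ _ (IH m (Nat.lt_succ_self m) _ hprem _ A rfl)
  | imp_neg Γ' R f U A' B m hU hprem =>
      intro Γ A heq
      rcases Multiset.cons_eq_cons.mp heq with ⟨hhd, hΓ⟩ | ⟨_, Θ, h1, h2⟩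
      · injection hhd with hR hA
        subst hΓ; subst hR
        rw [Set.preimage_empty] at hprem
        have s1 := IH m (Nat.lt_succ_self m) _ hprem _ A' rfl
        have s2 := IH m (Nat.lt_succ_self m) _ s1 _ B rfl
        exact LDerivH.mono _ _ s2
      · subst h1; subst h2
        have hprem' : LDerivH ((∅, A) ::ₘ (f ⁻¹' R, A') ::ₘ (R, B) ::ₘ Θ) m := by
          have : (f ⁻¹' R, A') ::ₘ (R, B) ::ₘ (∅, A) ::ₘ Θ
              = (∅, A) ::ₘ (f ⁻¹' R, A') ::ₘ (R, B) ::ₘ Θ := by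
            rw [Multiset.cons_swap (R, B) (∅, A), Multiset.cons_swap (f ⁻¹' R, A') (∅, A)]
          rwa [this] at hprem
        exact LDerivH.imp_neg _ _ _ _ _ _ _ hU (IH m (Nat.lt_succ_self m) _ hprem' _ A rfl)
  | imp_pos Γ₁ Γ₂ R f U A' B m hU hp1 hp2 =>
      intro Γ A heq
      rcases Multiset.cons_eq_cons.mp heq with ⟨hhd, hΓ⟩ | ⟨_, Θ, h1, h2⟩
      · injection hhd with hR hA
        exact absurd (hR ▸ hU) Ultrafilter.empty_notMem
      · subst h2
        have hmem : ((∅ : Set ρ), A) ∈ Γ₁ + Γ₂ := by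
          rw [h1]; exact Multiset.mem_cons_self _ _
        rcases Multiset.mem_add.mp hmem with hm | hm
        · have hΓ₁ : Γ₁ = (∅, A) ::ₘ Γ₁.erase (∅, A) := (Multiset.cons_erase hm).symm
          have hΘ : Θ = Γ₁.erase (∅, A) + Γ₂ := by
            have : ((∅ : Set ρ), A) ::ₘ Θ = (∅, A) ::ₘ (Γ₁.erase (∅, A) + Γ₂) := by
              rw [← h1, hΓ₁]; simp [Multiset.cons_add]
            exact (Multiset.cons_inj_right _).mp this
          have hp1' : LDerivH ((∅, A) ::ₘ (f ⁻¹' R, A') ::ₘ Γ₁.erase (∅, A)) m := by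
            rw [← Multiset.cons_swap, ← hΓ₁]; exact hp1
          have s1 := IH m (Nat.lt_succ_self m) _ hp1' _ A rfl
          rw [hΘ]
          exact LDerivH.imp_pos _ _ _ _ _ _ _ _ hU s1 hp2
        · have hΓ₂ : Γ₂ = (∅, A) ::ₘ Γ₂.erase (∅, A) := (Multiset.cons_erase hm).symm
          have hΘ : Θ = Γ₁ + Γ₂.erase (∅, A) := by
            apply (Multiset.cons_inj_right ((∅ : Set ρ), A)).mp
            rw [← h1]
            conv_lhs => rw [hΓ₂]
            rw [Multiset.add_cons]
          have hp2' : LDerivH ((∅, A) ::ₘ (R, B) ::ₘ Γ₂.erase (∅, A)) m := by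
            rw [← Multiset.cons_swap, ← hΓ₂]; exact hp2
          have s2 := IH m (Nat.lt_succ_self m) _ hp2' _ A rfl
          rw [hΘ]
          exact LDerivH.imp_pos _ _ _ _ _ _ _ _ hU hp1 s2
  | conj_neg_l Γ' R U A' B m hU hprem =>
      intro Γ A heq
      rcases Multiset.cons_eq_cons.mp heq with ⟨hhd, hΓ⟩ | ⟨_, Θ, h1, h2⟩
      · injection hhd with hR hA
        subst hΓ; subst hR
        exact LDerivH.mono _ _ (IH m (Nat.lt_succ_self m) _ hprem _ A' rfl)
      · subst h1; subst h2
        rw [Multiset.cons_swap] at hprem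
        exact LDerivH.conj_neg_l _ _ _ _ _ _ hU (IH m (Nat.lt_succ_self m) _ hprem _ A rfl)
  | conj_neg_r Γ' R U A' B m hU hprem =>
      intro Γ A heq
      rcases Multiset.cons_eq_cons.mp heq with ⟨hhd, hΓ⟩ | ⟨_, Θ, h1, h2⟩
      · injection hhd with hR hA
        subst hΓ; subst hR
        exact LDerivH.mono _ _ (IH m (Nat.lt_succ_self m) _ hprem _ B rfl)
      · subst h1; subst h2
        rw [Multiset.cons_swap] at hprem
        exact LDerivH.conj_neg_r _ _ _ _ _ _ hU (IH m (Nat.lt_succ_self m) _ hprem _ A rfl)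
  | conj_pos Γ' R U A' B m hU hp1 hp2 =>
      intro Γ A heq
      rcases Multiset.cons_eq_cons.mp heq with ⟨hhd, hΓ⟩ | ⟨_, Θ, h1, h2⟩
      · injection hhd with hR hA
        exact absurd (hR ▸ hU) Ultrafilter.empty_notMem
      · subst h1; subst h2
        rw [Multiset.cons_swap] at hp1
        rw [Multiset.cons_swap] at hp2
        exact LDerivH.conj_pos _ _ _ _ _ _ hU (IH m (Nat.lt_succ_self m) _ hp1 _ A rfl)
          (IH m (Nat.lt_succ_self m) _ hp2 _ A rfl)
  | bang_pos Γ' R U A' m hU hnb hprem =>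
      intro Γ A heq
      rcases Multiset.cons_eq_cons.mp heq with ⟨hhd, hΓ⟩ | ⟨_, Θ, h1, h2⟩
      · injection hhd with hR hA
        exact absurd (hR ▸ hU) Ultrafilter.empty_notMem
      · subst h1; subst h2
        rw [Multiset.cons_swap] at hprem
        refine LDerivH.bang_pos _ _ _ _ _ hU ?_ (IH m (Nat.lt_succ_self m) _ hprem _ A rfl)
        intro p hp
        exact hnb p (Multiset.mem_cons_of_mem hp)
  | bang_neg_weaken Γ' R U A' m hU hprem =>
      intro Γ A heq
      rcases Multiset.cons_eq_cons.mp heq with ⟨hhd, hΓ⟩ | ⟨_, Θ, h1, h2⟩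
      · injection hhd with hR hA
        subst hΓ
        exact LDerivH.mono _ _ hprem
      · subst h1; subst h2
        exact LDerivH.bang_neg_weaken _ _ _ _ _ hU (IH m (Nat.lt_succ_self m) _ hprem _ A rfl)
  | bang_neg_derelict Γ' R U A' m hU hprem =>
      intro Γ A heq
      rcases Multiset.cons_eq_cons.mp heq with ⟨hhd, hΓ⟩ | ⟨_, Θ, h1, h2⟩
      · injection hhd with hR hA
        subst hΓ; subst hR
        exact LDerivH.mono _ _ (IH m (Nat.lt_succ_self m) _ hprem _ A' rfl)
      · subst h1; subst h2
        rw [Multiset.cons_swap] at hprem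
        exact LDerivH.bang_neg_derelict _ _ _ _ _ hU (IH m (Nat.lt_succ_self m) _ hprem _ A rfl)
  | bang_neg_contract Γ' R U A' m hU hprem =>
      intro Γ A heq
      rcases Multiset.cons_eq_cons.mp heq with ⟨hhd, hΓ⟩ | ⟨_, Θ, h1, h2⟩
      · injection hhd with hR hA
        subst hΓ; subst hR; subst hA
        have s1 := IH m (Nat.lt_succ_self m) _ hprem _ (LFormula.bang U A') rfl
        have s2 := IH m (Nat.lt_succ_self m) _ s1 _ (LFormula.bang U A') rfl
        exact LDerivH.mono _ _ s2
      · subst h1; subst h2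
        have hprem' : LDerivH ((∅, A) ::ₘ (R, LFormula.bang U A') ::ₘ (R, LFormula.bang U A') ::ₘ Θ) m := by
          have : (R, LFormula.bang U A') ::ₘ (R, LFormula.bang U A') ::ₘ (∅, A) ::ₘ Θ
              = (∅, A) ::ₘ (R, LFormula.bang U A') ::ₘ (R, LFormula.bang U A') ::ₘ Θ := by
            rw [Multiset.cons_swap (R, LFormula.bang U A') (∅, A),
              Multiset.cons_swap (R, LFormula.bang U A') (∅, A)]
          rwa [this] at hprem
        exact LDerivH.bang_neg_contract _ _ _ _ _ hU (IH m (Nat.lt_succ_self m) _ hprem' _ A rfl)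
  | mono Γ' m hprem =>
      intro Γ A heq
      subst heq
      exact LDerivH.mono _ _ (IH m (Nat.lt_succ_self m) _ hprem _ A rfl)

/-- 1-cut in LMRL is admissible with a height bound: any derivation of Γ, ⟨∅⟩A of
height at most n yields a derivation of Γ of height at most n. -/
theorem lmrl_one_cut_height {ρ : Type} (Γ : LSeq ρ) (A : LFormula ρ) (n : ℕ)
    (h : LDerivH ((∅, A) ::ₘ Γ) n) : LDerivH Γ n := by
  exact lmrl_cut_aux n _ h Γ A rfl
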